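/- Let G be a finite simple connected triangle-free graph and let xy be an edge of G. Then κ_LLY(x,y) ≤ 2/deg(y). -/

import Mathlib

open Finset

noncomputable section

/-- The (normalized) graph Laplacian `Δf(x) = (1/deg x) ∑_{y ~ x} (f y - f x)`. -/
def graphLap {V : Type*} [Fintype V] (G : SimpleGraph V) [DecidableRel G.Adj]
    (f : V → ℝ) (x : V) : ℝ :=
  (G.degree x : ℝ)⁻¹ * ∑ y ∈ G.neighborFinset x, (f y - f x)

/-- `f` is 1-Lipschitz with respect to the graph distance. -/
def IsLip1 {V : Type*} (G : SimpleGraph V) (f : V → ℝ) : Prop :=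
  ∀ u v : V, |f u - f v| ≤ G.dist u v

/-- Lin–Lu–Yau curvature of a pair of vertices, via the limit-free
(Münch–Wojciechowski) formulation. -/
def kappaLLY {V : Type*} [Fintype V] (G : SimpleGraph V) [DecidableRel G.Adj]
    (x y : V) : ℝ :=
  sInf { r : ℝ | ∃ f : V → ℝ, IsLip1 G f ∧ f y - f x = G.dist x y ∧
      r = (graphLap G f x - graphLap G f y) / G.dist x y }

/-- `G` contains a cycle of length `n` as a subgraph: `n` distinct vertices
arranged cyclically so that consecutive ones are adjacent. -/
def HasCycleLen {V : Type*} (G : SimpleGraph V) (n : ℕ) [NeZero n] : Prop :=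
  ∃ c : Fin n → V, Function.Injective c ∧ ∀ i : Fin n, G.Adj (c i) (c (i + 1))

lemma lap_abs_le {V : Type*} [Fintype V] (G : SimpleGraph V) [DecidableRel G.Adj]
    (f : V → ℝ) (hf : IsLip1 G f) (x : V) : |graphLap G f x| ≤ 1 := by
  unfold graphLap
  rcases Nat.eq_zero_or_pos (G.degree x) with h | h
  · simp [h]
  · rw [abs_mul]
    have hd : (0:ℝ) < G.degree x := by exact_mod_cast h
    have h1 : |∑ y ∈ G.neighborFinset x, (f y - f x)| ≤ (G.degree x : ℝ) := by
      calc |∑ y ∈ G.neighborFinset x, (f y - f x)|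
          ≤ ∑ y ∈ G.neighborFinset x, |f y - f x| := Finset.abs_sum_le_sum_abs _ _
        _ ≤ ∑ y ∈ G.neighborFinset x, 1 := by
            apply Finset.sum_le_sum
            intro z hz
            rw [SimpleGraph.mem_neighborFinset] at hz
            have := hf z x
            rw [SimpleGraph.dist_comm, SimpleGraph.dist_eq_one_iff_adj.mpr hz] at this
            simpa using this
        _ = (G.degree x : ℝ) := by simp [SimpleGraph.card_neighborFinset_eq_degree]
    rw [abs_of_nonneg (le_of_lt (inv_pos.mpr hd))]
    calc (G.degree x : ℝ)⁻¹ * |∑ y ∈ G.neighborFinset x, (f y - f x)|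
        ≤ (G.degree x : ℝ)⁻¹ * (G.degree x : ℝ) := by
          exact mul_le_mul_of_nonneg_left h1 (le_of_lt (inv_pos.mpr hd))
      _ = 1 := inv_mul_cancel₀ (ne_of_gt hd)

theorem curvature_le_two_div_degree {V : Type*} [Fintype V] (G : SimpleGraph V)
    [DecidableRel G.Adj] (hconn : G.Connected)
    (h3 : ¬ HasCycleLen G 3) (x y : V) (hxy : G.Adj x y) :
    kappaLLY G x y ≤ 2 / G.degree y := by
  classical
  set f : V → ℝ := fun v => G.dist x v with hf
  have hdxy : G.dist x y = 1 := SimpleGraph.dist_eq_one_iff_adj.mpr hxy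
  have hlip : IsLip1 G f := by
    intro u v
    rw [abs_sub_le_iff]
    have hc : G.dist v u = G.dist u v := SimpleGraph.dist_comm
    have t1 : G.dist x u ≤ G.dist x v + G.dist v u := hconn.dist_triangle
    have t2 : G.dist x v ≤ G.dist x u + G.dist u v := hconn.dist_triangle
    rw [hc] at t1
    have t1' : (G.dist x u : ℝ) ≤ G.dist x v + G.dist u v := by exact_mod_cast t1
    have t2' : (G.dist x v : ℝ) ≤ G.dist x u + G.dist u v := by exact_mod_cast t2
    constructor <;> simp only [hf] <;> linarith
  have hfy : f y - f x = G.dist x y := by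
    simp [hf, SimpleGraph.dist_self]
  have hdegy : 0 < G.degree y := (SimpleGraph.degree_pos_iff_exists_adj G y).mpr ⟨x, hxy.symm⟩
  have hdegyR : (0:ℝ) < G.degree y := by exact_mod_cast hdegy
  have hdegx : 0 < G.degree x := (SimpleGraph.degree_pos_iff_exists_adj G x).mpr ⟨y, hxy⟩
  -- compute Δf x = 1
  have hlapx : graphLap G f x = 1 := by
    unfold graphLap
    have : ∑ z ∈ G.neighborFinset x, (f z - f x) = (G.degree x : ℝ) := by
      rw [← SimpleGraph.card_neighborFinset_eq_degree]
      rw [Finset.card_eq_sum_ones (G.neighborFinset x)]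
      push_cast
      apply Finset.sum_congr rfl
      intro z hz
      rw [SimpleGraph.mem_neighborFinset] at hz
      simp [hf, SimpleGraph.dist_eq_one_iff_adj.mpr hz, SimpleGraph.dist_self]
    rw [this, inv_mul_cancel₀ (by exact_mod_cast hdegx.ne')]
  -- key: any neighbor z ≠ x of y has dist x z ≥ 2
  have hkey : ∀ z ∈ G.neighborFinset y, z ≠ x → 2 ≤ G.dist x z := by
    intro z hz hzx
    rw [SimpleGraph.mem_neighborFinset] at hz
    have h0 : G.dist x z ≠ 0 := by
      intro h
      exact hzx ((hconn.dist_eq_zero_iff).mp h).symm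
    have h1 : G.dist x z ≠ 1 := by
      intro h
      have hadj : G.Adj x z := SimpleGraph.dist_eq_one_iff_adj.mp h
      apply h3
      refine ⟨![x, y, z], ?_, ?_⟩
      · intro i j hij
        fin_cases i <;> fin_cases j <;> simp_all
      · intro i
        fin_cases i <;> simp [hxy, hz, hadj.symm]
    omega
  -- Δf y ≥ (deg y - 2)/deg y
  have hlapy : (G.degree y - 2 : ℝ) / G.degree y ≤ graphLap G f y := by
    unfold graphLap
    have hxmem : x ∈ G.neighborFinset y := by
      rw [SimpleGraph.mem_neighborFinset]; exact hxy.symm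
    have hsum : (G.degree y : ℝ) - 2 ≤ ∑ z ∈ G.neighborFinset y, (f z - f y) := by
      rw [← Finset.add_sum_erase _ _ hxmem]
      have hx0 : f x - f y = -1 := by
        simp [hf, SimpleGraph.dist_self, hdxy]
      have hrest : ((G.degree y : ℝ) - 1) ≤ ∑ z ∈ (G.neighborFinset y).erase x, (f z - f y) := by
        have hcard : ((G.neighborFinset y).erase x).card = G.degree y - 1 := by
          rw [Finset.card_erase_of_mem hxmem, SimpleGraph.card_neighborFinset_eq_degree]
        calc ((G.degree y : ℝ) - 1) = (((G.neighborFinset y).erase x).card : ℝ) := by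
              simp [hcard, Nat.cast_sub hdegy]
          _ = ∑ z ∈ (G.neighborFinset y).erase x, (1:ℝ) := by simp
          _ ≤ ∑ z ∈ (G.neighborFinset y).erase x, (f z - f y) := by
              apply Finset.sum_le_sum
              intro z hz
              have hzx : z ≠ x := Finset.ne_of_mem_erase hz
              have hzmem : z ∈ G.neighborFinset y := Finset.mem_of_mem_erase hz
              have h2 : 2 ≤ G.dist x z := hkey z hzmem hzx
              have : (2:ℝ) ≤ G.dist x z := by exact_mod_cast h2
              simp only [hf, hdxy]
              push_cast
              linarith
      linarith
    rw [div_le_iff₀ hdegyR] at *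
    calc (G.degree y : ℝ) - 2 ≤ ∑ z ∈ G.neighborFinset y, (f z - f y) := hsum
      _ = (G.degree y : ℝ)⁻¹ * (∑ z ∈ G.neighborFinset y, (f z - f y)) * G.degree y := by
          field_simp
  -- membership
  set r : ℝ := (graphLap G f x - graphLap G f y) / G.dist x y with hr
  have hmem : r ∈ { r : ℝ | ∃ f : V → ℝ, IsLip1 G f ∧ f y - f x = G.dist x y ∧
      r = (graphLap G f x - graphLap G f y) / G.dist x y } := ⟨f, hlip, hfy, rfl⟩
  have hbdd : BddBelow { r : ℝ | ∃ f : V → ℝ, IsLip1 G f ∧ f y - f x = G.dist x y ∧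
      r = (graphLap G f x - graphLap G f y) / G.dist x y } := by
    refine ⟨-2, ?_⟩
    rintro s ⟨g, hg, hgy, rfl⟩
    rw [hdxy]
    have h1 := abs_le.mp (lap_abs_le G g hg x)
    have h2 := abs_le.mp (lap_abs_le G g hg y)
    simp only [Nat.cast_one, div_one]
    linarith [h1.1, h1.2, h2.1, h2.2]
  refine le_trans (csInf_le hbdd hmem) ?_
  rw [hr, hdxy, hlapx]
  simp only [Nat.cast_one, div_one]
  have heq : 1 - ((G.degree y : ℝ) - 2) / G.degree y = 2 / G.degree y := by
    field_simp
    ring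
  linarith [hlapy]
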